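/- Let H be a complex Hilbert space, ν > 0, and let g : ℝ → H be a measurable function with ∫_ℝ ‖g(t)‖² exp(−2νt) dt < ∞. Then for every t ∈ ℝ the function g is Bochner integrable on (−∞, t], and the function G : ℝ → H, G(t) := ∫_{(−∞,t]} g(τ) dτ, satisfies ∫_ℝ ‖G(t)‖² exp(−2νt) dt ≤ (1/ν²) ∫_ℝ ‖g(t)‖² exp(−2νt) dt. -/

import Mathlib

open MeasureTheory
open scoped ENNReal NNReal

open Set Real

-- exponential lintegral over Ioi
private lemma lint_exp_Ioi {b : ℝ} (hb : 0 < b) (a : ℝ) :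
    ∫⁻ x in Set.Ioi a, ENNReal.ofReal (Real.exp (-(b * x))) =
      ENNReal.ofReal (Real.exp (-(b * a)) / b) := by
  rw [← ofReal_integral_eq_lintegral_ofReal]
  · congr 1
    have h := integral_comp_mul_left_Ioi (fun y => Real.exp (-y)) a hb
    simp only [smul_eq_mul] at h
    rw [h, integral_exp_neg_Ioi]
    rw [div_eq_inv_mul]
  · simpa [neg_mul, IntegrableOn] using exp_neg_integrableOn_Ioi a hb
  · filter_upwards with x using (exp_pos _).le

private lemma lint_exp_Ici {b : ℝ} (hb : 0 < b) (a : ℝ) :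
    ∫⁻ x in Set.Ici a, ENNReal.ofReal (Real.exp (-(b * x))) =
      ENNReal.ofReal (Real.exp (-(b * a)) / b) := by
  rw [← Measure.restrict_congr_set (Ioi_ae_eq_Ici (a := a))]
  exact lint_exp_Ioi hb a

private lemma lint_exp_Iic {b : ℝ} (hb : 0 < b) (t : ℝ) :
    ∫⁻ x in Set.Iic t, ENNReal.ofReal (Real.exp (b * x)) =
      ENNReal.ofReal (Real.exp (b * t) / b) := by
  have hmp : MeasurePreserving (fun x : ℝ => -x) volume volume :=
    Measure.measurePreserving_neg volume
  have hemb : MeasurableEmbedding (fun x : ℝ => -x) :=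
    (Homeomorph.neg ℝ).measurableEmbedding
  have h := hmp.setLIntegral_comp_preimage_emb hemb
    (fun x => ENNReal.ofReal (Real.exp (b * x))) (Set.Iic t)
  have hpre : (fun x : ℝ => -x) ⁻¹' Set.Iic t = Set.Ici (-t) := by
    ext x; simp [neg_le]
  rw [hpre] at h
  rw [← h]
  have : ∀ x : ℝ, ENNReal.ofReal (Real.exp (b * -x)) = ENNReal.ofReal (Real.exp (-(b * x))) := by
    intro x; ring_nf
  simp only [this]
  rw [lint_exp_Ici hb]
  congr 2
  ring_nf

private lemma lint_CS (μ : MeasureTheory.Measure ℝ) {u v : ℝ → ℝ≥0∞}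
    (hu : AEMeasurable u μ) (hv : AEMeasurable v μ) :
    (∫⁻ a, u a * v a ∂μ) * (∫⁻ a, u a * v a ∂μ) ≤
      (∫⁻ a, u a * u a ∂μ) * (∫⁻ a, v a * v a ∂μ) := by
  have hpq : Real.HolderConjugate 2 2 := Real.holderConjugate_iff.mpr ⟨one_lt_two, by norm_num⟩
  have h := ENNReal.lintegral_mul_le_Lp_mul_Lq μ hpq hu hv
  have h2 : ∀ w : ℝ → ℝ≥0∞, (∫⁻ a, w a ^ (2:ℝ) ∂μ) = ∫⁻ a, w a * w a ∂μ := by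
    intro w; refine lintegral_congr fun a => ?_
    rw [show (2:ℝ) = ((2:ℕ):ℝ) by norm_num, ENNReal.rpow_natCast, pow_two]
  rw [h2 u, h2 v] at h
  calc (∫⁻ a, u a * v a ∂μ) * (∫⁻ a, u a * v a ∂μ)
      ≤ ((∫⁻ a, u a * u a ∂μ) ^ (1/2:ℝ) * (∫⁻ a, v a * v a ∂μ) ^ (1/2:ℝ)) *
        ((∫⁻ a, u a * u a ∂μ) ^ (1/2:ℝ) * (∫⁻ a, v a * v a ∂μ) ^ (1/2:ℝ)) :=
        mul_le_mul' (by simpa using h) (by simpa using h)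
    _ = (∫⁻ a, u a * u a ∂μ) * (∫⁻ a, v a * v a ∂μ) := by
        rw [mul_mul_mul_comm, ← ENNReal.rpow_add_of_nonneg _ _ (by norm_num) (by norm_num),
          ← ENNReal.rpow_add_of_nonneg _ _ (by norm_num) (by norm_num)]
        norm_num

/-- For `g ∈ L²_ν(ℝ;H)` (with weight `exp(-2νt)`), `g` is Bochner
integrable on every half line `(-∞, t]`, and the time integral
`G(t) = ∫_{-∞}^t g(τ) dτ` satisfies the weighted bound
`∫ ‖G(t)‖² exp(-2νt) dt ≤ ν⁻² ∫ ‖g(t)‖² exp(-2νt) dt`. -/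
theorem stmt17
    {H : Type*} [NormedAddCommGroup H] [InnerProductSpace ℂ H] [CompleteSpace H]
    (ν : ℝ) (hν : 0 < ν) (g : ℝ → H) (hg : AEStronglyMeasurable g volume)
    (hint : ∫⁻ t : ℝ, (‖g t‖₊ : ℝ≥0∞) ^ 2 * ENNReal.ofReal (Real.exp (-2 * ν * t)) < ⊤) :
    (∀ t : ℝ, IntegrableOn g (Set.Iic t) volume) ∧
    ∫⁻ t : ℝ, (‖∫ τ in Set.Iic t, g τ‖₊ : ℝ≥0∞) ^ 2 * ENNReal.ofReal (Real.exp (-2 * ν * t))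
      ≤ ENNReal.ofReal (1 / ν ^ 2) *
        ∫⁻ t : ℝ, (‖g t‖₊ : ℝ≥0∞) ^ 2 * ENNReal.ofReal (Real.exp (-2 * ν * t)) := by
  classical
  set f : ℝ → ℝ≥0∞ := fun τ => (‖hg.mk g τ‖₊ : ℝ≥0∞) with hfdef
  have hfmeas : Measurable f := hg.stronglyMeasurable_mk.enorm
  have hfae : (fun τ => (‖g τ‖₊ : ℝ≥0∞)) =ᵐ[volume] f :=
    hg.ae_eq_mk.mono fun x hx => by simp [hfdef, hx]
  set w : ℝ → ℝ≥0∞ := fun t => ENNReal.ofReal (Real.exp (-2 * ν * t)) with hwdef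
  set Ψ : ℝ → ℝ≥0∞ := fun τ => f τ * f τ * w τ with hΨdef
  have hΨmeas : Measurable Ψ :=
    ((hfmeas.mul hfmeas).mul (ENNReal.measurable_ofReal.comp (Real.measurable_exp.comp (measurable_id.const_mul (-2*ν)))))
  have hJ : ∫⁻ t : ℝ, (‖g t‖₊ : ℝ≥0∞) ^ 2 * w t = ∫⁻ τ, Ψ τ := by
    refine lintegral_congr_ae (hfae.mono fun x hx => ?_)
    simp only [hΨdef, ← hx, pow_two]
  have hJfin : ∫⁻ τ, Ψ τ ≠ ⊤ := by rw [← hJ]; exact hint.ne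
  -- Step A: finiteness of ∫⁻ f on Iic t
  have hFfin : ∀ t : ℝ, ∫⁻ τ in Set.Iic t, f τ ≠ ⊤ := by
    intro t
    set u : ℝ → ℝ≥0∞ := fun τ => f τ * ENNReal.ofReal (Real.exp (-(ν * τ))) with hudef
    set v : ℝ → ℝ≥0∞ := fun τ => ENNReal.ofReal (Real.exp (ν * τ)) with hvdef
    have humeas : Measurable u := hfmeas.mul (ENNReal.measurable_ofReal.comp (Real.measurable_exp.comp (measurable_id.const_mul ν).neg))
    have hvmeas : Measurable v := ENNReal.measurable_ofReal.comp (Real.measurable_exp.comp (measurable_id.const_mul ν))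
    have hsplit : ∀ τ : ℝ, f τ = u τ * v τ := by
      intro τ
      rw [hudef, hvdef]
      simp only [mul_assoc, ← ENNReal.ofReal_mul (exp_pos _).le, ← Real.exp_add]
      norm_num
    have hCS := lint_CS (volume.restrict (Set.Iic t)) humeas.aemeasurable hvmeas.aemeasurable
    have huu : ∫⁻ τ in Set.Iic t, u τ * u τ ≤ ∫⁻ τ, Ψ τ := by
      calc ∫⁻ τ in Set.Iic t, u τ * u τ = ∫⁻ τ in Set.Iic t, Ψ τ := by
            refine lintegral_congr fun τ => ?_
            rw [hudef, hΨdef, hwdef]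
            simp only [mul_mul_mul_comm, ← ENNReal.ofReal_mul (exp_pos _).le, ← Real.exp_add]
            ring_nf
            congr 1
            rw [pow_two, ← ENNReal.ofReal_mul (exp_pos _).le, ← Real.exp_add]
            congr 1
            ring
        _ ≤ ∫⁻ τ, Ψ τ := setLIntegral_le_lintegral _ _
    have hvv : ∫⁻ τ in Set.Iic t, v τ * v τ = ENNReal.ofReal (Real.exp (2 * ν * t) / (2 * ν)) := by
      rw [show (∫⁻ τ in Set.Iic t, v τ * v τ) =
          ∫⁻ τ in Set.Iic t, ENNReal.ofReal (Real.exp ((2 * ν) * τ)) from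
        lintegral_congr fun τ => by
          rw [hvdef]; rw [← ENNReal.ofReal_mul (exp_pos _).le, ← Real.exp_add]; ring_nf]
      exact lint_exp_Iic (by linarith) t
    have hfin : (∫⁻ τ in Set.Iic t, f τ) * (∫⁻ τ in Set.Iic t, f τ) ≠ ⊤ := by
      have : (∫⁻ τ in Set.Iic t, f τ) * (∫⁻ τ in Set.Iic t, f τ) ≤
          (∫⁻ τ, Ψ τ) * ENNReal.ofReal (Real.exp (2 * ν * t) / (2 * ν)) := by
        calc (∫⁻ τ in Set.Iic t, f τ) * (∫⁻ τ in Set.Iic t, f τ)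
            = (∫⁻ τ in Set.Iic t, u τ * v τ) * (∫⁻ τ in Set.Iic t, u τ * v τ) := by
              rw [lintegral_congr fun τ => hsplit τ]
          _ ≤ (∫⁻ τ in Set.Iic t, u τ * u τ) * (∫⁻ τ in Set.Iic t, v τ * v τ) := hCS
          _ ≤ (∫⁻ τ, Ψ τ) * ENNReal.ofReal (Real.exp (2 * ν * t) / (2 * ν)) := by
              rw [hvv]; exact mul_le_mul_left huu _
      exact ne_top_of_le_ne_top (ENNReal.mul_ne_top hJfin ENNReal.ofReal_ne_top) this
    intro htop
    rw [htop, ENNReal.top_mul_top] at hfin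
    exact hfin rfl
  have hIntOn : ∀ t : ℝ, IntegrableOn g (Set.Iic t) volume := by
    intro t
    refine ⟨hg.restrict, ?_⟩
    have : HasFiniteIntegral g (volume.restrict (Set.Iic t)) := by
      show (∫⁻ a, (‖g a‖₊ : ℝ≥0∞) ∂(volume.restrict (Set.Iic t))) < ⊤
      rw [lintegral_congr_ae (ae_restrict_of_ae hfae)]
      exact (hFfin t).lt_top
    exact this
  refine ⟨hIntOn, ?_⟩
  have hexp : ∀ x y : ℝ, ENNReal.ofReal (Real.exp x) * ENNReal.ofReal (Real.exp y) =
      ENNReal.ofReal (Real.exp (x + y)) := fun x y => by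
    rw [← ENNReal.ofReal_mul (exp_pos _).le, ← Real.exp_add]
  set F : ℝ → ℝ≥0∞ := fun t => ∫⁻ τ in Set.Iic t, f τ with hFdef
  set k : ℝ → ℝ → ℝ≥0∞ := fun t τ => ENNReal.ofReal (Real.exp (-(ν * (t - τ)))) with hkdef
  -- pointwise Cauchy–Schwarz bound
  have hC1 : ∀ t : ℝ, (‖∫ τ in Set.Iic t, g τ‖₊ : ℝ≥0∞) ^ 2 * w t ≤
      ENNReal.ofReal (1 / ν) * ∫⁻ τ in Set.Iic t, k t τ * Ψ τ := by
    intro t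
    set u : ℝ → ℝ≥0∞ := fun τ => ENNReal.ofReal (Real.exp (-(ν * (t - τ)) / 2)) with hudef
    set v : ℝ → ℝ≥0∞ := fun τ =>
      f τ * ENNReal.ofReal (Real.exp (-(ν * τ) + -(ν * (t - τ)) / 2)) with hvdef
    have humeas : Measurable u := ENNReal.measurable_ofReal.comp (Real.measurable_exp.comp
      ((((measurable_const.sub measurable_id).const_mul ν).neg).div_const 2))
    have hvmeas : Measurable v := hfmeas.mul (ENNReal.measurable_ofReal.comp
      (Real.measurable_exp.comp (((measurable_id.const_mul ν).neg).add
        ((((measurable_const.sub measurable_id).const_mul ν).neg).div_const 2))))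
    have hG : (‖∫ τ in Set.Iic t, g τ‖₊ : ℝ≥0∞) ≤ F t := by
      refine le_trans (enorm_integral_le_lintegral_enorm _) (le_of_eq ?_)
      exact lintegral_congr_ae (ae_restrict_of_ae hfae)
    have hstep1 : F t * ENNReal.ofReal (Real.exp (-(ν * t))) =
        ∫⁻ τ in Set.Iic t, u τ * v τ := by
      rw [hFdef, ← lintegral_mul_const _ hfmeas]
      refine lintegral_congr fun τ => ?_
      simp only [hudef, hvdef]
      rw [mul_comm (ENNReal.ofReal (Real.exp (-(ν * (t - τ)) / 2))), mul_assoc, hexp]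
      congr 3
      ring
    have huu : ∫⁻ τ in Set.Iic t, u τ * u τ = ENNReal.ofReal (1 / ν) := by
      have h1 : ∀ τ : ℝ, u τ * u τ =
          ENNReal.ofReal (Real.exp (ν * τ)) * ENNReal.ofReal (Real.exp (-(ν * t))) := by
        intro τ
        simp only [hudef]
        rw [hexp, hexp]
        congr 2
        ring
      have hm1 : Measurable fun a : ℝ => ENNReal.ofReal (Real.exp (ν * a)) :=
        ENNReal.measurable_ofReal.comp (Real.measurable_exp.comp (measurable_id.const_mul ν))
      rw [lintegral_congr h1, lintegral_mul_const _ hm1, lint_exp_Iic hν t,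
        ← ENNReal.ofReal_mul (by positivity)]
      congr 1
      rw [div_mul_eq_mul_div, mul_comm, ← Real.exp_add]
      simp
    have hvv : ∫⁻ τ in Set.Iic t, v τ * v τ = ∫⁻ τ in Set.Iic t, k t τ * Ψ τ := by
      refine lintegral_congr fun τ => ?_
      simp only [hvdef, hkdef, hΨdef, hwdef]
      trans (f τ * f τ * ENNReal.ofReal (Real.exp ((-(ν * τ) + -(ν * (t - τ)) / 2) +
        (-(ν * τ) + -(ν * (t - τ)) / 2))))
      · have hsq : (f τ * ENNReal.ofReal (Real.exp (-(ν * τ) + -(ν * (t - τ)) / 2))) *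
            (f τ * ENNReal.ofReal (Real.exp (-(ν * τ) + -(ν * (t - τ)) / 2))) =
            f τ * f τ * (ENNReal.ofReal (Real.exp (-(ν * τ) + -(ν * (t - τ)) / 2)) *
              ENNReal.ofReal (Real.exp (-(ν * τ) + -(ν * (t - τ)) / 2))) := by ring
        rw [hsq, hexp]
      trans (f τ * f τ * ENNReal.ofReal (Real.exp (-2 * ν * τ + -(ν * (t - τ)))))
      · congr 2; ring
      · rw [← hexp]; ring
    calc (‖∫ τ in Set.Iic t, g τ‖₊ : ℝ≥0∞) ^ 2 * w t
        ≤ F t ^ 2 * w t := by gcongr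
      _ = (F t * ENNReal.ofReal (Real.exp (-(ν * t)))) *
          (F t * ENNReal.ofReal (Real.exp (-(ν * t)))) := by
          simp only [hwdef]
          rw [mul_mul_mul_comm, hexp, pow_two]
          congr 3
          ring
      _ ≤ (∫⁻ τ in Set.Iic t, u τ * u τ) * (∫⁻ τ in Set.Iic t, v τ * v τ) := by
          rw [hstep1]; exact lint_CS _ humeas.aemeasurable hvmeas.aemeasurable
      _ = ENNReal.ofReal (1 / ν) * ∫⁻ τ in Set.Iic t, k t τ * Ψ τ := by rw [huu, hvv]
  -- Tonelli
  set Φ : ℝ → ℝ → ℝ≥0∞ := fun t τ =>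
    Set.indicator {q : ℝ × ℝ | q.2 ≤ q.1} (fun q => k q.1 q.2 * Ψ q.2) (t, τ) with hΦdef
  have hΦmeas : Measurable (Function.uncurry Φ) := by
    have h : Function.uncurry Φ =
        Set.indicator {q : ℝ × ℝ | q.2 ≤ q.1} (fun q => k q.1 q.2 * Ψ q.2) := rfl
    rw [h]
    refine Measurable.indicator ?_ (measurableSet_le measurable_snd measurable_fst)
    exact (ENNReal.measurable_ofReal.comp (Real.measurable_exp.comp
      (((measurable_fst.sub measurable_snd).const_mul ν).neg))).mul (hΨmeas.comp measurable_snd)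
  have hΦt : ∀ t : ℝ, ∫⁻ τ, Φ t τ = ∫⁻ τ in Set.Iic t, k t τ * Ψ τ := by
    intro t
    rw [← lintegral_indicator measurableSet_Iic]
    refine lintegral_congr fun τ => ?_
    simp [hΦdef, Set.indicator_apply, Set.mem_setOf_eq, Set.mem_Iic]
  have hΦτ : ∀ τ : ℝ, ∫⁻ t, Φ t τ = ENNReal.ofReal (1 / ν) * Ψ τ := by
    intro τ
    have h1 : ∀ t : ℝ, Φ t τ = Set.indicator (Set.Ici τ) (fun t => k t τ * Ψ τ) t := by
      intro t; simp [hΦdef, Set.indicator_apply, Set.mem_setOf_eq, Set.mem_Ici]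
    have hm1 : Measurable fun t : ℝ => k t τ * Ψ τ := by
      refine Measurable.mul_const ?_ _
      exact ENNReal.measurable_ofReal.comp (Real.measurable_exp.comp
        (((measurable_id.sub measurable_const).const_mul ν).neg))
    have hm2 : Measurable fun t : ℝ => ENNReal.ofReal (Real.exp (-(ν * t))) :=
      ENNReal.measurable_ofReal.comp (Real.measurable_exp.comp (measurable_id.const_mul ν).neg)
    have h2 : ∀ t : ℝ, k t τ =
        ENNReal.ofReal (Real.exp (ν * τ)) * ENNReal.ofReal (Real.exp (-(ν * t))) := by
      intro t
      simp only [hkdef]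
      rw [hexp]
      congr 2
      ring
    have hm1b : Measurable fun t : ℝ => k t τ :=
      ENNReal.measurable_ofReal.comp (Real.measurable_exp.comp
        (((measurable_id.sub measurable_const).const_mul ν).neg))
    rw [lintegral_congr h1, lintegral_indicator measurableSet_Ici,
      lintegral_mul_const _ hm1b, lintegral_congr fun t => h2 t,
      lintegral_const_mul _ hm2, lint_exp_Ici hν τ, ← ENNReal.ofReal_mul (exp_pos _).le]
    have h3 : Real.exp (ν * τ) * (Real.exp (-(ν * τ)) / ν) = 1 / ν := by
      rw [← mul_div_assoc, ← Real.exp_add]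
      simp
    rw [h3, mul_comm]
  calc ∫⁻ t, (‖∫ τ in Set.Iic t, g τ‖₊ : ℝ≥0∞) ^ 2 * w t
      ≤ ∫⁻ t, ENNReal.ofReal (1 / ν) * ∫⁻ τ, Φ t τ :=
        lintegral_mono fun t => by rw [hΦt t]; exact hC1 t
    _ = ENNReal.ofReal (1 / ν) * ∫⁻ t, ∫⁻ τ, Φ t τ :=
        lintegral_const_mul' _ _ ENNReal.ofReal_ne_top
    _ = ENNReal.ofReal (1 / ν) * ∫⁻ τ, ∫⁻ t, Φ t τ := by
        rw [lintegral_lintegral_swap hΦmeas.aemeasurable]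
    _ = ENNReal.ofReal (1 / ν) * ∫⁻ τ, ENNReal.ofReal (1 / ν) * Ψ τ := by
        rw [lintegral_congr hΦτ]
    _ = ENNReal.ofReal (1 / ν) * (ENNReal.ofReal (1 / ν) * ∫⁻ τ, Ψ τ) := by
        rw [lintegral_const_mul' _ _ ENNReal.ofReal_ne_top]
    _ = ENNReal.ofReal (1 / ν ^ 2) * ∫⁻ τ, Ψ τ := by
        rw [← mul_assoc, ← ENNReal.ofReal_mul (by positivity)]
        congr 2
        field_simp
    _ = ENNReal.ofReal (1 / ν ^ 2) * ∫⁻ t, (‖g t‖₊ : ℝ≥0∞) ^ 2 * w t := by rw [hJ]
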